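/- Let G be a splittable directed graph with inconsistent edges E^i, and let C₁ ≠ C₂ be distinct source-equivalence classes. Then it is not the case that both C₁ ∈ coupled⁺(C₂) and C₂ ∈ coupled⁺(C₁). -/

import Mathlib

namespace CQA

variable {V : Type*}

/-- Directed reachability along edges in `A`. -/
def reach (A : Set (V × V)) (u v : V) : Prop :=
  Relation.ReflTransGen (fun x y => (x, y) ∈ A) u v

/-- `u` and `v` are in the same strongly connected component of the graph with edges `E`. -/
def sameSCC (E : Set (V × V)) (u v : V) : Prop := reach E u v ∧ reach E v u

/-- There is an undirected path in `E` from `a` to `b` all of whose vertices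
(including the endpoints) avoid the set `A`. -/
def ureach (E : Set (V × V)) (A : Set V) (a b : V) : Prop :=
  a ∉ A ∧ Relation.ReflTransGen (fun x y => ((x, y) ∈ E ∨ (y, x) ∈ E) ∧ y ∉ A) a b

/-- `u_R^{+,R}`: vertices reachable from the source of `R` in `G − {R}`. -/
def uplus (E : Set (V × V)) (R : V × V) : Set V := {v | reach (E \ {R}) R.1 v}

/-- `u^⊕`: vertices reachable from `u` using only consistent edges `Ec`. -/
def uoplus (Ec : Set (V × V)) (u : V) : Set V := {v | reach Ec u v}

/-- `C` is a source-equivalence class of inconsistent edges `Ei`. -/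
def IsClass (E Ei : Set (V × V)) (C : Set (V × V)) : Prop :=
  ∃ R ∈ Ei, C = {S ∈ Ei | sameSCC E R.1 S.1}

/-- `C^⊕ = ⋂_{R ∈ C} u_R^⊕`. -/
def Coplus (Ec : Set (V × V)) (C : Set (V × V)) : Set V :=
  {v | ∀ R ∈ C, v ∈ uoplus Ec R.1}

/-- `C⁺ = ⋂_{R ∈ C} u_R^{+,R}`. -/
def Cplus (E : Set (V × V)) (C : Set (V × V)) : Set V :=
  {v | ∀ R ∈ C, v ∈ uplus E R}

/-- `C₁ ≤⊕ C₂` iff some `S ∈ C₂` has `u_S ∈ C₁^⊕`. -/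
def leOplus (Ec : Set (V × V)) (C₁ C₂ : Set (V × V)) : Prop :=
  ∃ S ∈ C₂, S.1 ∈ Coplus Ec C₁

/-- The strict order `C₁ <⊕ C₂`. -/
def ltOplus (Ec : Set (V × V)) (C₁ C₂ : Set (V × V)) : Prop :=
  leOplus Ec C₁ C₂ ∧ C₁ ≠ C₂

/-- A sink: a maximal element of `<⊕` among source-equivalence classes. -/
def IsSink (E Ei Ec : Set (V × V)) (C : Set (V × V)) : Prop :=
  IsClass E Ei C ∧ ∀ C', IsClass E Ei C' → ¬ ltOplus Ec C C'

/-- `C' ∈ coupled⊕(C)`. -/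
def coupledOplusCl (E Ec : Set (V × V)) (C C' : Set (V × V)) : Prop :=
  C' = C ∨ ∃ R ∈ C, ∃ S ∈ C', ureach E (Coplus Ec C) R.2 S.1

/-- `C' ∈ coupled⁺(C)`. -/
def coupledPlusCl (E : Set (V × V)) (C C' : Set (V × V)) : Prop :=
  C' = C ∨ ∃ R ∈ C, ∃ S ∈ C', ureach E (Cplus E C) R.2 S.1

/-- `S ∈ coupled⁺(R)` for inconsistent edges `R, S`:
either `S ∈ [R]`, or there is an undirected path `v_R ↔ u_S` avoiding `u_R^{+,R}`. -/
def coupledPlusEdge (E Ei : Set (V × V)) (R S : V × V) : Prop :=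
  S ∈ Ei ∧ (sameSCC E R.1 S.1 ∨ ureach E (uplus E R) R.2 S.1)

/-- `G` is splittable: every coupled pair of inconsistent edges is source-equivalent. -/
def Splittable (E Ec : Set (V × V)) : Prop :=
  ∀ R ∈ E \ Ec, ∀ S ∈ E \ Ec,
    coupledPlusEdge E (E \ Ec) R S → coupledPlusEdge E (E \ Ec) S R → sameSCC E R.1 S.1

/-- `G` is f-closed: for every inconsistent edge `R`,
`v_R^⊕ ∩ u_R^{+,R} ⊆ u_R^⊕`. -/
def FClosed (E Ec : Set (V × V)) : Prop :=
  ∀ R ∈ E \ Ec, ∀ v, v ∈ uoplus Ec R.2 → v ∈ uplus E R → v ∈ uoplus Ec R.1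

end CQA

section Aux

open CQA

variable {V : Type*}

private lemma reach_mono' {A B : Set (V × V)} (h : A ⊆ B) {u v : V} (hr : reach A u v) :
    reach B u v :=
  Relation.ReflTransGen.mono (r := fun x y => (x, y) ∈ A) (fun _ _ hxy => h hxy) u v hr

private lemma uplus_reach {E : Set (V × V)} {R : V × V} {v : V} (h : v ∈ uplus E R) :
    reach E R.1 v :=
  reach_mono' Set.diff_subset h

private lemma sameSCC_symm {E : Set (V × V)} {u v : V} (h : sameSCC E u v) : sameSCC E v u :=
  ⟨h.2, h.1⟩

private lemma sameSCC_trans {E : Set (V × V)} {u v w : V} (h1 : sameSCC E u v)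
    (h2 : sameSCC E v w) : sameSCC E u w :=
  ⟨Relation.ReflTransGen.trans h1.1 h2.1, Relation.ReflTransGen.trans h2.2 h1.2⟩

private lemma stepForce {E : Set (V × V)} {R : V × V} {c d : V} (hc : c ∈ uplus E R)
    (hcd : (c, d) ∈ E) (hd : d ∉ uplus E R) : c = R.1 ∧ d = R.2 := by
  by_cases h : ((c, d) : V × V) = R
  · exact ⟨congrArg Prod.fst h, congrArg Prod.snd h⟩
  · exact absurd (Relation.ReflTransGen.tail hc ⟨hcd, by simpa using h⟩) hd

private lemma ureach_tail {E : Set (V × V)} {A : Set V} {a b c : V} (h : ureach E A a b)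
    (he : (b, c) ∈ E ∨ (c, b) ∈ E) (hc : c ∉ A) : ureach E A a c :=
  ⟨h.1, Relation.ReflTransGen.tail h.2 ⟨he, hc⟩⟩

private lemma ureach_end {E : Set (V × V)} {A : Set V} {a b : V} (h : ureach E A a b) :
    b ∉ A := by
  obtain ⟨ha, hw⟩ := h
  rcases Relation.ReflTransGen.cases_tail hw with h1 | ⟨c, _, hcb⟩
  · exact h1 ▸ ha
  · exact hcb.2

/-- If `z` is reachable from `u_T` but not while avoiding `T`, then there is a
directed path from `v_T` to `z` entirely avoiding `u_T^{+,T}`. -/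
private lemma reachGood {E : Set (V × V)} {T : V × V} {z : V} (hr : reach E T.1 z)
    (hz : z ∉ uplus E T) : ureach E (uplus E T) T.2 z := by
  revert hz
  induction hr with
  | refl => intro hz; exact absurd Relation.ReflTransGen.refl hz
  | @tail b c hb hbc ih =>
    intro hc
    by_cases hbu : b ∈ uplus E T
    · obtain ⟨h1, h2⟩ := stepForce hbu hbc hc
      subst h2
      exact ⟨hc, Relation.ReflTransGen.refl⟩
    · exact ureach_tail (ih hbu) (Or.inl hbc) hc

/-- From a path witnessing class-level coupling, extract an edge `T` in the class
with an edge-level coupling path. -/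
private lemma classGood {E : Set (V × V)} {C : Set (V × V)} (hCE : C ⊆ E)
    (hscc : ∀ A ∈ C, ∀ B ∈ C, sameSCC E A.1 B.1)
    {R : V × V} (hR : R ∈ C) {z : V} (h : ureach E (Cplus E C) R.2 z) :
    ∃ T ∈ C, ureach E (uplus E T) T.2 z := by
  obtain ⟨h0, hw⟩ := h
  induction hw with
  | refl =>
    have h0' : ¬ ∀ T ∈ C, R.2 ∈ uplus E T := h0
    push_neg at h0'
    obtain ⟨T, hT, hnT⟩ := h0'
    have hr : reach E T.1 R.2 :=
      Relation.ReflTransGen.tail (hscc T hT R hR).1 (show (R.1, R.2) ∈ E from hCE hR)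
    exact ⟨T, hT, reachGood hr hnT⟩
  | @tail b c hb hbc ih =>
    obtain ⟨T, hT, hub⟩ := ih
    by_cases hcu : c ∈ uplus E T
    · have hnc : ¬ ∀ T₂ ∈ C, c ∈ uplus E T₂ := hbc.2
      push_neg at hnc
      obtain ⟨T₂, hT₂, hc2⟩ := hnc
      have hr2 : reach E T₂.1 c :=
        Relation.ReflTransGen.trans (hscc T₂ hT₂ T hT).1 (uplus_reach hcu)
      exact ⟨T₂, hT₂, reachGood hr2 hc2⟩
    · exact ⟨T, hT, ureach_tail hub hbc.1 hcu⟩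

/-- Extend an edge-level coupling path along directed reachability (single witness). -/
private lemma extendGood {E : Set (V × V)} {A : V × V} {b t : V}
    (hu : ureach E (uplus E A) A.2 b) (hr : reach E b t) :
    ureach E (uplus E A) A.2 t ∨ t ∈ uplus E A := by
  induction hr with
  | refl => exact Or.inl hu
  | @tail c d hc hcd ih =>
    by_cases hd : d ∈ uplus E A
    · exact Or.inr hd
    · rcases ih with h | h
      · exact Or.inl (ureach_tail h (Or.inl hcd) hd)
      · obtain ⟨h1, h2⟩ := stepForce h hcd hd
        subst h2
        exact Or.inl ⟨hd, Relation.ReflTransGen.refl⟩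

/-- Extend an edge-level coupling path along directed reachability, allowing the
witnessing edge to change within the class. -/
private lemma extendGoodClass {E : Set (V × V)} {C : Set (V × V)}
    (hscc : ∀ A ∈ C, ∀ B ∈ C, sameSCC E A.1 B.1)
    {B₀ : V × V} (hB₀ : B₀ ∈ C) {s t : V}
    (hu : ureach E (uplus E B₀) B₀.2 s) (hr : reach E s t) :
    (∃ B ∈ C, ureach E (uplus E B) B.2 t) ∨ t ∈ Cplus E C := by
  induction hr with
  | refl => exact Or.inl ⟨B₀, hB₀, hu⟩
  | @tail c d hc hcd ih =>
    by_cases hdC : d ∈ Cplus E C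
    · exact Or.inr hdC
    · have hd' : ¬ ∀ B₂ ∈ C, d ∈ uplus E B₂ := hdC
      push_neg at hd'
      obtain ⟨B₂, hB₂, hd2⟩ := hd'
      rcases ih with ⟨B, hB, hub⟩ | hcC
      · by_cases hdu : d ∈ uplus E B
        · have hr2 : reach E B₂.1 d :=
            Relation.ReflTransGen.trans (hscc B₂ hB₂ B hB).1 (uplus_reach hdu)
          exact Or.inl ⟨B₂, hB₂, reachGood hr2 hd2⟩
        · exact Or.inl ⟨B, hB, ureach_tail hub (Or.inl hcd) hdu⟩
      · have hcu : c ∈ uplus E B₂ := hcC B₂ hB₂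
        obtain ⟨h1, h2⟩ := stepForce hcu hcd hd2
        subst h2
        exact Or.inl ⟨B₂, hB₂, hd2, Relation.ReflTransGen.refl⟩

/-- If `x ∈ u_B^{+,B}`, `x` reaches `y`, and `y ∉ u_B^{+,B}`, then `x` reaches `u_B`. -/
private lemma escapeReach {E : Set (V × V)} {B : V × V} {x y : V}
    (hr : reach E x y) (hy : y ∉ uplus E B) (hx : x ∈ uplus E B) : reach E x B.1 := by
  revert hx
  induction hr using Relation.ReflTransGen.head_induction_on with
  | refl => intro hx; exact absurd hx hy
  | @head a c hac hcb ih =>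
    intro hx
    by_cases hcu : c ∈ uplus E B
    · exact Relation.ReflTransGen.head hac (ih hcu)
    · obtain ⟨h1, h2⟩ := stepForce hx hac hcu
      exact h1 ▸ Relation.ReflTransGen.refl

private lemma class_scc {E Ei C : Set (V × V)} (h : IsClass E Ei C) :
    ∀ A ∈ C, ∀ B ∈ C, sameSCC E A.1 B.1 := by
  obtain ⟨W, hW, rfl⟩ := h
  intro A hA B hB
  exact sameSCC_trans (sameSCC_symm hA.2) hB.2

private lemma class_sub {E Ei C : Set (V × V)} (h : IsClass E Ei C) : C ⊆ Ei := by
  obtain ⟨W, hW, rfl⟩ := h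
  exact fun x hx => hx.1

private lemma class_eq_of {E Ei C₁ C₂ : Set (V × V)} (h₁ : IsClass E Ei C₁)
    (h₂ : IsClass E Ei C₂) {A B : V × V} (hA : A ∈ C₂) (hB : B ∈ C₁)
    (hs : sameSCC E A.1 B.1) : C₁ = C₂ := by
  obtain ⟨W₁, hW₁, rfl⟩ := h₁
  obtain ⟨W₂, hW₂, rfl⟩ := h₂
  have s12 : sameSCC E W₁.1 W₂.1 :=
    sameSCC_trans (sameSCC_trans hB.2 (sameSCC_symm hs)) (sameSCC_symm hA.2)
  ext X
  exact ⟨fun hX => ⟨hX.1, sameSCC_trans (sameSCC_symm s12) hX.2⟩,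
    fun hX => ⟨hX.1, sameSCC_trans s12 hX.2⟩⟩

/-- The key asymmetric case: `¬ reach u_T u_{T'}` together with cross edge-level
coupling paths in both directions yields a contradiction. -/
private lemma sigma_case {E Ec : Set (V × V)} (hsp : Splittable E Ec)
    {C₁ C₂ : Set (V × V)}
    (hscc1 : ∀ A ∈ C₁, ∀ B ∈ C₁, sameSCC E A.1 B.1)
    (hscc2 : ∀ A ∈ C₂, ∀ B ∈ C₂, sameSCC E A.1 B.1)
    (hEi1 : C₁ ⊆ E \ Ec) (hEi2 : C₂ ⊆ E \ Ec)
    (cross : ∀ A ∈ C₂, ∀ B ∈ C₁, ¬ sameSCC E A.1 B.1)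
    {T S T' S' : V × V} (hT : T ∈ C₂) (hS : S ∈ C₁) (hT' : T' ∈ C₁) (hS' : S' ∈ C₂)
    (G1 : ureach E (uplus E T) T.2 S.1) (G2 : ureach E (uplus E T') T'.2 S'.1)
    (hn : ¬ reach E T.1 T'.1) : False := by
  have hrS'T : reach E S'.1 T.1 := (hscc2 S' hS' T hT).1
  rcases extendGoodClass hscc1 hT' G2 hrS'T with ⟨B, hB, gB⟩ | hTC
  · -- some edge B of C₁ has a coupling path to u_T
    have hrSB : reach E S.1 B.1 := (hscc1 S hS B hB).1
    rcases extendGood G1 hrSB with g1b | hBu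
    · -- mutual edge-level coupling between T and B: contradicts splittability
      have hsplit := hsp T (hEi2 hT) B (hEi1 hB) ⟨hEi1 hB, Or.inr g1b⟩ ⟨hEi2 hT, Or.inr gB⟩
      exact cross T hT B hB hsplit
    · -- u_B ∈ u_T^{+,T} would give reach u_T u_{T'}
      exact hn (Relation.ReflTransGen.trans (uplus_reach hBu) (hscc1 B hB T' hT').1)
  · -- u_T ∈ C₁⁺: escape through T' gives reach u_T u_{T'}
    have h1 : T.1 ∈ uplus E T' := hTC T' hT'
    have h2 : reach E T.1 S'.1 := (hscc2 T hT S' hS').1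
    have h3 : S'.1 ∉ uplus E T' := ureach_end G2
    exact hn (escapeReach h2 h3 h1)

end Aux

open CQA in
/-- in a splittable graph, distinct classes cannot be mutually coupled. -/
theorem stmt_10 {V : Type*} [Fintype V] (E Ec : Set (V × V)) (hEc : Ec ⊆ E)
    (hsp : Splittable E Ec)
    (C₁ C₂ : Set (V × V)) (h₁ : IsClass E (E \ Ec) C₁) (h₂ : IsClass E (E \ Ec) C₂)
    (hne : C₁ ≠ C₂) :
    ¬ (coupledPlusCl E C₂ C₁ ∧ coupledPlusCl E C₁ C₂) := by
  rintro ⟨h21, h12⟩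
  rcases h21 with hEq | ⟨R, hR, S, hS, hP⟩
  · exact hne hEq
  rcases h12 with hEq | ⟨R', hR', S', hS', hP'⟩
  · exact hne hEq.symm
  have hscc1 := class_scc h₁
  have hscc2 := class_scc h₂
  have hEi1 : C₁ ⊆ E \ Ec := class_sub h₁
  have hEi2 : C₂ ⊆ E \ Ec := class_sub h₂
  have hsub1 : C₁ ⊆ E := fun x hx => (hEi1 hx).1
  have hsub2 : C₂ ⊆ E := fun x hx => (hEi2 hx).1
  obtain ⟨T, hT, G1⟩ := classGood hsub2 hscc2 hR hP
  obtain ⟨T', hT', G2⟩ := classGood hsub1 hscc1 hR' hP'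
  have cross : ∀ A ∈ C₂, ∀ B ∈ C₁, ¬ sameSCC E A.1 B.1 :=
    fun A hA B hB hs => hne (class_eq_of h₁ h₂ hA hB hs)
  have cross' : ∀ A ∈ C₁, ∀ B ∈ C₂, ¬ sameSCC E A.1 B.1 :=
    fun A hA B hB hs => cross B hB A hA (sameSCC_symm hs)
  by_cases hr1 : reach E T.1 T'.1
  · by_cases hr2 : reach E T'.1 T.1
    · exact cross T hT T' hT' ⟨hr1, hr2⟩
    · exact sigma_case hsp hscc2 hscc1 hEi2 hEi1 cross' hT' hS' hT hS G2 G1 hr2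
  · exact sigma_case hsp hscc1 hscc2 hEi1 hEi2 cross hT hS hT' hS' G1 G2 hr1
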